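/- Let k be a field, S = k[[X, Y]] the formal power series ring, m₀ ≥ 2, and R = S/(Y^{2m₀}). Then the set of Ulrich ideals I of R with y^{m₀} ∈ I equals { (x^ℓ + αy, y^{m₀}) : ℓ > 0, α ∈ R }. Moreover, if ℓ, ℓ′ > 0 and α, α′ ∈ R satisfy (x^ℓ + αy, y^{m₀}) = (x^{ℓ′} + α′y, y^{m₀}), then ℓ = ℓ′ and α ≡ α′ mod m, where m is the maximal ideal of R. -/

import Mathlib

set_option maxHeartbeats 1000000
set_option synthInstance.maxHeartbeats 400000

/-- A family `s : Fin n → R` is a system of parameters of the local ring `R`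
if `n` equals the Krull dimension of `R` and the ideal generated by `s` is
primary for the maximal ideal (i.e. its radical is the maximal ideal). -/
def IsSystemOfParameters (R : Type*) [CommRing R] [IsLocalRing R]
    {n : ℕ} (s : Fin n → R) : Prop :=
  (n : WithBot ℕ∞) = ringKrullDim R ∧
    (Ideal.span (Set.range s)).radical = IsLocalRing.maximalIdeal R

/-- A parameter ideal is an ideal generated by a system of parameters. -/
def Ideal.IsParameterIdeal {R : Type*} [CommRing R] [IsLocalRing R]
    (Q : Ideal R) : Prop :=
  ∃ (n : ℕ) (s : Fin n → R), IsSystemOfParameters R s ∧ Q = Ideal.span (Set.range s)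

/-- An ideal `I` of a local ring `R` is an Ulrich ideal if it is primary for the
maximal ideal and there is a parameter ideal `Q ⊆ I` with `I ≠ Q`, `I² = QI`,
and `I/I²` free over `R/I`. -/
def Ideal.IsUlrich {R : Type*} [CommRing R] [IsLocalRing R] (I : Ideal R) : Prop :=
  I.radical = IsLocalRing.maximalIdeal R ∧
    ∃ Q : Ideal R, Q.IsParameterIdeal ∧ Q ≤ I ∧ I ≠ Q ∧ I ^ 2 = Q * I ∧
      Module.Free (R ⧸ I) I.Cotangent

/-- A local ring is Cohen–Macaulay if it is Noetherian and some system of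
parameters is a regular sequence. -/
def IsCohenMacaulayLocalRing (R : Type*) [CommRing R] [IsLocalRing R] : Prop :=
  IsNoetherianRing R ∧
    ∃ (n : ℕ) (s : Fin n → R), IsSystemOfParameters R s ∧
      RingTheory.Sequence.IsRegular R (List.ofFn s)

/-- A local ring is regular if it is Noetherian and its maximal ideal is
generated by `dim R` elements. -/
def IsRegularLocalRing' (R : Type*) [CommRing R] [IsLocalRing R] : Prop :=
  IsNoetherianRing R ∧
    ∃ (n : ℕ) (s : Fin n → R), (n : WithBot ℕ∞) = ringKrullDim R ∧
      Ideal.span (Set.range s) = IsLocalRing.maximalIdeal R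

/-- A module is decomposable if it is the (internal) direct sum of two nonzero
submodules. -/
def Module.Decomposable (R M : Type*) [CommRing R] [AddCommGroup M] [Module R M] : Prop :=
  ∃ N₁ N₂ : Submodule R M, N₁ ≠ ⊥ ∧ N₂ ≠ ⊥ ∧ IsCompl N₁ N₂

/-- The minimal number of generators of an ideal. -/
noncomputable def Ideal.minGen {R : Type*} [CommRing R] (I : Ideal R) : ℕ :=
  sInf {n : ℕ | ∃ s : Fin n → R, I = Ideal.span (Set.range s)}


open MvPowerSeries Finsupp

namespace UlrichAux

variable {k : Type*} [Field k]

/-- Setting variable `i` to 0 (underlying function). -/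
noncomputable def sz (i : Fin 2) (W : MvPowerSeries (Fin 2) k) : MvPowerSeries (Fin 2) k :=
  fun d => if d i = 0 then coeff d W else 0

theorem coeff_sz (i : Fin 2) (W : MvPowerSeries (Fin 2) k) (d : Fin 2 →₀ ℕ) :
    coeff d (sz i W) = if d i = 0 then coeff d W else 0 := rfl

theorem sz_one (i : Fin 2) : sz i (1 : MvPowerSeries (Fin 2) k) = 1 := by
  apply MvPowerSeries.ext; intro d
  classical
  rw [coeff_sz, MvPowerSeries.coeff_one]
  by_cases h : d i = 0
  · simp [h]
  · rw [if_neg h, if_neg]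
    intro h0; rw [h0] at h; exact h rfl

theorem sz_mul (i : Fin 2) (a b : MvPowerSeries (Fin 2) k) :
    sz i (a * b) = sz i a * sz i b := by
  apply MvPowerSeries.ext; intro d
  rw [coeff_sz, MvPowerSeries.coeff_mul, MvPowerSeries.coeff_mul]
  by_cases h : d i = 0
  · rw [if_pos h]
    refine Finset.sum_congr rfl fun p hp => ?_
    rw [Finset.HasAntidiagonal.mem_antidiagonal] at hp
    have h1 : p.1 i = 0 ∧ p.2 i = 0 := by
      have := congrArg (fun e : Fin 2 →₀ ℕ => e i) hp
      simp only [Finsupp.add_apply] at this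
      rw [h] at this
      exact ⟨Nat.eq_zero_of_add_eq_zero_right this, Nat.eq_zero_of_add_eq_zero_left this⟩
    rw [coeff_sz, coeff_sz, if_pos h1.1, if_pos h1.2]
  · rw [if_neg h, eq_comm]
    refine Finset.sum_eq_zero fun p hp => ?_
    rw [Finset.HasAntidiagonal.mem_antidiagonal] at hp
    have h1 : ¬(p.1 i = 0) ∨ ¬(p.2 i = 0) := by
      by_contra hc
      push_neg at hc
      have := congrArg (fun e : Fin 2 →₀ ℕ => e i) hp
      simp only [Finsupp.add_apply] at this
      rw [hc.1, hc.2] at this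
      exact h this.symm
    rcases h1 with h1 | h1
    · rw [coeff_sz, if_neg h1, zero_mul]
    · rw [coeff_sz i b, if_neg h1, mul_zero]

theorem sz_add (i : Fin 2) (a b : MvPowerSeries (Fin 2) k) :
    sz i (a + b) = sz i a + sz i b := by
  apply MvPowerSeries.ext; intro d
  rw [map_add, coeff_sz, coeff_sz, coeff_sz, map_add]
  by_cases h : d i = 0
  · simp [h]
  · simp [h]

/-- Setting variable `i` to 0, as a ring hom. -/
noncomputable def setZero (i : Fin 2) : MvPowerSeries (Fin 2) k →+* MvPowerSeries (Fin 2) k where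
  toFun := sz i
  map_one' := sz_one i
  map_mul' := sz_mul i
  map_zero' := by
    apply MvPowerSeries.ext; intro d
    rw [coeff_sz, map_zero]; simp
  map_add' := sz_add i

theorem coeff_setZero (i : Fin 2) (W : MvPowerSeries (Fin 2) k) (d : Fin 2 →₀ ℕ) :
    coeff d (setZero i W) = if d i = 0 then coeff d W else 0 := rfl


theorem setZero_idem (i : Fin 2) (W : MvPowerSeries (Fin 2) k) :
    setZero i (setZero i W) = setZero i W := by
  apply MvPowerSeries.ext; intro d
  rw [coeff_setZero, coeff_setZero]
  by_cases h : d i = 0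
  · rw [if_pos h, if_pos h]
  · rw [if_neg h, if_neg h]

theorem setZero_X_self (i : Fin 2) : setZero i (X i : MvPowerSeries (Fin 2) k) = 0 := by
  apply MvPowerSeries.ext; intro d
  classical
  rw [coeff_setZero, map_zero, MvPowerSeries.coeff_X]
  by_cases h : d i = 0
  · rw [if_pos h, if_neg]
    intro h0
    rw [h0] at h
    simp at h
  · rw [if_neg h]

theorem setZero_X_ne {i j : Fin 2} (h : i ≠ j) :
    setZero i (X j : MvPowerSeries (Fin 2) k) = X j := by
  apply MvPowerSeries.ext; intro d
  classical
  rw [coeff_setZero, MvPowerSeries.coeff_X]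
  by_cases hd : d i = 0
  · rw [if_pos hd]
  · rw [if_neg hd, eq_comm, if_neg]
    intro h0
    rw [h0] at hd
    rw [Finsupp.single_apply, if_neg (fun hh => h hh.symm)] at hd
    · exact hd rfl

/-- Decomposition `W = setZero i W + X i * V`. -/
theorem exists_setZero_add_X_mul (i : Fin 2) (W : MvPowerSeries (Fin 2) k) :
    ∃ V, W = setZero i W + X i * V := by
  classical
  refine ⟨@id (MvPowerSeries (Fin 2) k) (fun d => coeff (d + Finsupp.single i 1) W), ?_⟩
  apply MvPowerSeries.ext; intro d
  rw [map_add, coeff_setZero]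
  have hX : (X i : MvPowerSeries (Fin 2) k) = monomial (Finsupp.single i 1) 1 := rfl
  rw [hX, MvPowerSeries.coeff_monomial_mul]
  by_cases h : d i = 0
  · rw [if_pos h, if_neg, add_zero]
    intro hle
    have := hle i
    rw [Finsupp.single_apply, if_pos rfl, h] at this
    omega
  · rw [if_neg h, if_pos, zero_add, one_mul]
    · show coeff d W = coeff (d - Finsupp.single i 1 + Finsupp.single i 1) W
      have hidx : d - Finsupp.single i 1 + Finsupp.single i 1 = d := by
        ext j
        rw [Finsupp.add_apply, Finsupp.tsub_apply, Finsupp.single_apply]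
        by_cases hj : i = j
        · subst hj; rw [if_pos rfl]; omega
        · rw [if_neg hj]; omega
      rw [hidx]
    · intro j
      rw [Finsupp.single_apply]
      by_cases hj : i = j
      · subst hj; rw [if_pos rfl]; omega
      · rw [if_neg hj]; omega

theorem X_dvd_iff_setZero (i : Fin 2) (W : MvPowerSeries (Fin 2) k) :
    (X i : MvPowerSeries (Fin 2) k) ∣ W ↔ setZero i W = 0 := by
  constructor
  · rintro ⟨V, rfl⟩
    rw [map_mul, setZero_X_self, zero_mul]
  · intro h
    obtain ⟨V, hV⟩ := exists_setZero_add_X_mul i W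
    rw [h, zero_add] at hV
    exact ⟨V, hV⟩

theorem X_prime (i : Fin 2) : Prime (X i : MvPowerSeries (Fin 2) k) := by
  constructor
  · intro h0
    have := congrArg (coeff (Finsupp.single i 1)) h0
    rw [MvPowerSeries.coeff_X, if_pos rfl, map_zero] at this
    exact one_ne_zero this
  constructor
  · intro hu
    rw [MvPowerSeries.isUnit_iff_constantCoeff, MvPowerSeries.constantCoeff_X] at hu
    exact hu.ne_zero rfl
  · intro a b hab
    rw [X_dvd_iff_setZero] at hab ⊢
    rw [X_dvd_iff_setZero]
    rw [map_mul] at hab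
    exact mul_eq_zero.mp hab


variable {k : Type*} [Field k]

local notation "S" => MvPowerSeries (Fin 2) k

instance : IsDomain (MvPowerSeries (Fin 2) k) := NoZeroDivisors.to_isDomain _

theorem exists_X_pow_mul_unit (W : S) (hW : setZero 1 W = W) (h0 : W ≠ 0) :
    ∃ (n : ℕ) (u : S), IsUnit u ∧ W = X 0 ^ n * u ∧
      coeff (Finsupp.single 0 n) W ≠ 0 := by
  have hex : ∃ m, coeff (Finsupp.single 0 m) W ≠ 0 := by
    by_contra hc
    push_neg at hc
    apply h0
    apply MvPowerSeries.ext; intro d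
    by_cases h1 : d 1 = 0
    · have hd : d = Finsupp.single 0 (d 0) := by
        ext j; fin_cases j
        · simp
        · simpa using h1
      rw [map_zero, hd]
      exact hc _
    · rw [← hW, coeff_setZero, if_neg h1, map_zero]
  classical
  let n := Nat.find hex
  have hdvd : (X 0 : S) ^ n ∣ W := by
    rw [MvPowerSeries.X_pow_dvd_iff]
    intro m hm
    by_cases h1 : m 1 = 0
    · have hd : m = Finsupp.single 0 (m 0) := by
        ext j; fin_cases j
        · simp
        · simpa using h1
      rw [hd]
      have := Nat.find_min hex (m := m 0) hm
      push_neg at this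
      exact this
    · rw [← hW, coeff_setZero, if_neg h1]
  obtain ⟨V, hV⟩ := hdvd
  have hcoeff : coeff (Finsupp.single 0 n) W = constantCoeff V := by
    rw [hV, MvPowerSeries.X_pow_eq, MvPowerSeries.coeff_monomial_mul, if_pos le_rfl,
      one_mul, tsub_self]
    rfl
  have hne : constantCoeff V ≠ 0 := by
    rw [← hcoeff]; exact Nat.find_spec hex
  exact ⟨n, V, MvPowerSeries.isUnit_iff_constantCoeff.mpr (Ne.isUnit hne), hV,
    Nat.find_spec hex⟩

theorem maximalIdeal_S_eq :
    IsLocalRing.maximalIdeal S = Ideal.span {(X 0 : S), X 1} := by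
  apply le_antisymm
  · intro g hg
    rw [IsLocalRing.mem_maximalIdeal, mem_nonunits_iff] at hg
    have hcc : constantCoeff g = 0 := by
      by_contra h
      exact hg (MvPowerSeries.isUnit_iff_constantCoeff.mpr (Ne.isUnit h))
    obtain ⟨v, hv⟩ := exists_setZero_add_X_mul (k := k) 0 g
    have hY : (X 1 : S) ∣ setZero 0 g := by
      rw [X_dvd_iff_setZero]
      apply MvPowerSeries.ext; intro d
      rw [map_zero, coeff_setZero 1 _ d, coeff_setZero 0 g d]
      by_cases h1 : d 1 = 0
      · by_cases h0 : d 0 = 0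
        · rw [if_pos h1, if_pos h0]
          have hd : d = 0 := by
            ext j; fin_cases j
            · simpa using h0
            · simpa using h1
          rw [hd, MvPowerSeries.coeff_zero_eq_constantCoeff]
          exact hcc
        · rw [if_pos h1, if_neg h0]
      · rw [if_neg h1]
    obtain ⟨w, hw⟩ := hY
    rw [Ideal.mem_span_pair]
    exact ⟨v, w, by rw [mul_comm v, mul_comm w, ← hw, add_comm, ← hv]⟩
  · rw [Ideal.span_le]
    rintro g (rfl | rfl) <;>
    · rw [SetLike.mem_coe, IsLocalRing.mem_maximalIdeal, mem_nonunits_iff,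
        MvPowerSeries.isUnit_iff_constantCoeff, MvPowerSeries.constantCoeff_X]
      exact fun h => h.ne_zero rfl

/-- The key recursion: peeling off powers of `Y` from `Q * H + C * Y ^ M` where
`Q = X^j * u + Y * E`. -/
theorem key_recursion (j : ℕ) (u E : S) (hu : IsUnit u) :
    ∀ (p : ℕ) (M : ℕ) (H C : S), p ≤ M →
      (X 1 : S) ^ p ∣ ((X 0 ^ j * u + X 1 * E) * H + C * X 1 ^ M) →
      ∃ H1 C1, (X 0 ^ j * u + X 1 * E) * H + C * X 1 ^ M =
        X 1 ^ p * ((X 0 ^ j * u + X 1 * E) * H1 + C1 * X 1 ^ (M - p)) := by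
  intro p
  induction p with
  | zero =>
    intro M H C _ _
    exact ⟨H, C, by simp⟩
  | succ p ih =>
    intro M H C hpM hdvd
    have hM : 1 ≤ M := le_trans (Nat.succ_le_succ (Nat.zero_le p)) hpM
    set Q : S := X 0 ^ j * u + X 1 * E with hQ
    have hY1 : (X 1 : S) ∣ Q * H + C * X 1 ^ M :=
      dvd_trans (dvd_pow_self (X 1 : S) (Nat.succ_ne_zero p)) hdvd
    rw [X_dvd_iff_setZero] at hY1
    have hszQ : setZero 1 Q = X 0 ^ j * setZero 1 u := by
      rw [hQ, map_add, map_mul, map_mul, setZero_X_self, zero_mul, add_zero,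
        map_pow, setZero_X_ne (by decide : (1 : Fin 2) ≠ 0)]
    have hszY : setZero 1 ((X 1 : S) ^ M) = 0 := by
      rw [map_pow, setZero_X_self, zero_pow (by omega : M ≠ 0)]
    rw [map_add, map_mul, map_mul, hszQ, hszY, mul_zero, add_zero] at hY1
    have hXne : (X 0 : S) ^ j ≠ 0 := pow_ne_zero _ (X_prime 0).ne_zero
    have hune : setZero 1 u ≠ 0 := (hu.map (setZero (k := k) 1)).ne_zero
    have hszH : setZero 1 H = 0 := by
      rcases mul_eq_zero.mp hY1 with h | h
      · rcases mul_eq_zero.mp h with h' | h'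
        · exact absurd h' hXne
        · exact absurd h' hune
      · exact h
    obtain ⟨H', hH'⟩ := (X_dvd_iff_setZero 1 H).mpr hszH
    have hMsub : M - 1 + 1 = M := Nat.succ_pred_eq_of_pos hM
    have hsplit : Q * H + C * X 1 ^ M = X 1 * (Q * H' + C * X 1 ^ (M - 1)) := by
      rw [hH']
      have : (X 1 : S) ^ M = X 1 * X 1 ^ (M - 1) := by
        conv_lhs => rw [← hMsub]
        rw [pow_succ]
        ring
      rw [this]; ring
    have hdvd' : (X 1 : S) ^ p ∣ Q * H' + C * X 1 ^ (M - 1) := by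
      have h2 : (X 1 : S) * X 1 ^ p ∣ X 1 * (Q * H' + C * X 1 ^ (M - 1)) := by
        rw [← hsplit, ← pow_succ']
        exact hdvd
      exact (mul_dvd_mul_iff_left (X_prime (k := k) 1).ne_zero).mp h2
    obtain ⟨H1, C1, hrec⟩ := ih (M - 1) H' C (by omega) hdvd'
    refine ⟨H1, C1, ?_⟩
    rw [hsplit, hrec]
    have : M - 1 - p = M - (p + 1) := by omega
    rw [this, pow_succ']
    ring


section Quotient

variable {M : ℕ}

local notation "R'" => MvPowerSeries (Fin 2) k ⧸ Ideal.span {(X 1 : MvPowerSeries (Fin 2) k) ^ M}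
local notation "π" => Ideal.Quotient.mk (Ideal.span {(X 1 : MvPowerSeries (Fin 2) k) ^ M})

theorem mk_mem_span_pair_iff {A B G : S} :
    π G ∈ Ideal.span {π A, π B} ↔
      ∃ F1 F2 C : S, G = F1 * A + F2 * B + C * X 1 ^ M := by
  constructor
  · intro h
    rw [Ideal.mem_span_pair] at h
    obtain ⟨u, v, huv⟩ := h
    obtain ⟨F1, rfl⟩ := Ideal.Quotient.mk_surjective u
    obtain ⟨F2, rfl⟩ := Ideal.Quotient.mk_surjective v
    have h2 : π (F1 * A + F2 * B - G) = 0 := by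
      rw [map_sub, map_add, map_mul, map_mul, huv, sub_self]
    rw [Ideal.Quotient.eq_zero_iff_mem, Ideal.mem_span_singleton] at h2
    obtain ⟨C, hC⟩ := h2
    exact ⟨F1, F2, -C, by linear_combination -hC⟩
  · rintro ⟨F1, F2, C, rfl⟩
    rw [Ideal.mem_span_pair]
    refine ⟨π F1, π F2, ?_⟩
    have h0 : π (C * X 1 ^ M) = 0 := by
      rw [Ideal.Quotient.eq_zero_iff_mem, Ideal.mem_span_singleton]
      exact Dvd.intro_left C rfl
    have h1 : π (F1 * A + F2 * B + C * X 1 ^ M) = π (F1 * A + F2 * B) := by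
      rw [map_add, h0, add_zero]
    rw [h1, map_add, map_mul, map_mul]

theorem mk_mem_span_singleton_iff {A G : S} :
    π G ∈ Ideal.span {π A} ↔ ∃ F1 C : S, G = F1 * A + C * X 1 ^ M := by
  constructor
  · intro h
    rw [Ideal.mem_span_singleton] at h
    obtain ⟨v, hv⟩ := h
    obtain ⟨F1, rfl⟩ := Ideal.Quotient.mk_surjective v
    have h2 : π (A * F1 - G) = 0 := by rw [map_sub, map_mul, ← hv, sub_self]
    rw [Ideal.Quotient.eq_zero_iff_mem, Ideal.mem_span_singleton] at h2
    obtain ⟨C, hC⟩ := h2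
    exact ⟨F1, -C, by linear_combination -hC⟩
  · rintro ⟨F1, C, rfl⟩
    rw [Ideal.mem_span_singleton]
    refine ⟨π F1, ?_⟩
    have h0 : π (C * X 1 ^ M) = 0 := by
      rw [Ideal.Quotient.eq_zero_iff_mem, Ideal.mem_span_singleton]
      exact Dvd.intro_left C rfl
    rw [map_add, h0, add_zero, map_mul, mul_comm]

theorem isUnit_of_isUnit_mk (hM : M ≠ 0) {G : S} (h : IsUnit (π G)) : IsUnit G := by
  obtain ⟨r, hr⟩ := h.exists_right_inv
  obtain ⟨W, rfl⟩ := Ideal.Quotient.mk_surjective r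
  have h2 : π (G * W - 1) = 0 := by rw [map_sub, map_mul, hr, map_one, sub_self]
  rw [Ideal.Quotient.eq_zero_iff_mem, Ideal.mem_span_singleton] at h2
  obtain ⟨C, hC⟩ := h2
  have h1 : G * W = 1 + X 1 ^ M * C := by linear_combination hC
  have hu : IsUnit (G * W) := by
    rw [MvPowerSeries.isUnit_iff_constantCoeff, h1, map_add, map_one, map_mul, map_pow,
      MvPowerSeries.constantCoeff_X, zero_pow hM, zero_mul, add_zero]
    exact isUnit_one
  exact isUnit_of_mul_isUnit_left hu

theorem not_isUnit_mk_X (hM : M ≠ 0) (i : Fin 2) : ¬ IsUnit (π (X i)) := by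
  intro h
  have := isUnit_of_isUnit_mk hM h
  rw [MvPowerSeries.isUnit_iff_constantCoeff, MvPowerSeries.constantCoeff_X] at this
  exact this.ne_zero rfl

theorem maximalIdeal_R_eq (hM : M ≠ 0) [IsLocalRing R'] :
    IsLocalRing.maximalIdeal R' = Ideal.span {π (X 0), π (X 1)} := by
  apply le_antisymm
  · intro r hr
    rw [IsLocalRing.mem_maximalIdeal, mem_nonunits_iff] at hr
    obtain ⟨G, rfl⟩ := Ideal.Quotient.mk_surjective r
    have hG : ¬ IsUnit G := fun h => hr (h.map _)
    have hmem : G ∈ Ideal.span {(X 0 : S), X 1} := by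
      rw [← maximalIdeal_S_eq]
      exact hG
    have := Ideal.mem_map_of_mem (Ideal.Quotient.mk (Ideal.span {(X 1 : S) ^ M})) hmem
    rw [Ideal.map_span, Set.image_pair] at this
    exact this
  · rw [Ideal.span_le]
    rintro g (rfl | rfl) <;>
      simpa [IsLocalRing.mem_maximalIdeal, mem_nonunits_iff] using not_isUnit_mk_X (k := k) hM _

theorem span_y_isPrime (hM : M ≠ 0) : (Ideal.span {π (X 1)}).IsPrime := by
  have h1 : (Ideal.span {(X 1 : S)}).IsPrime :=
    (Ideal.span_singleton_prime (X_prime (k := k) 1).ne_zero).mpr (X_prime 1)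
  have hker : Ideal.span {(X 1 : S) ^ M} ≤ Ideal.span {(X 1 : S)} := by
    rw [Ideal.span_le]
    rintro g rfl
    rw [SetLike.mem_coe, Ideal.mem_span_singleton]
    exact dvd_pow_self _ hM
  haveI := h1
  have h2 := Ideal.map_isPrime_of_surjective
    (f := Ideal.Quotient.mk (Ideal.span {(X 1 : S) ^ M}))
    Ideal.Quotient.mk_surjective (I := Ideal.span {(X 1 : S)}) (by rwa [Ideal.mk_ker])
  rwa [Ideal.map_span, Set.image_singleton] at h2

theorem mk_X0_not_mem_span_y (hM : M ≠ 0) : π (X 0) ∉ Ideal.span {π (X 1)} := by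
  rw [mk_mem_span_singleton_iff]
  rintro ⟨F1, C, hC⟩
  have hdvd : (X 1 : S) ∣ X 0 := by
    rw [hC]
    apply dvd_add
    · exact Dvd.intro_left F1 rfl
    · exact Dvd.dvd.mul_left (dvd_pow_self _ hM) C
  rw [X_dvd_iff_setZero] at hdvd
  have := congrArg (coeff (Finsupp.single 0 1)) hdvd
  rw [coeff_setZero, if_pos (by simp), MvPowerSeries.coeff_X, if_pos rfl, map_zero] at this
  exact one_ne_zero this

/-- Any prime of the quotient is `(y)` or the maximal ideal. -/
theorem prime_eq_or_eq (hM : M ≠ 0) [IsLocalRing R'] (P : Ideal R') (hP : P.IsPrime) :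
    P = Ideal.span {π (X 1)} ∨ P = IsLocalRing.maximalIdeal R' := by
  classical
  set P' : Ideal S := Ideal.comap (Ideal.Quotient.mk (Ideal.span {(X 1 : S) ^ M})) P with hP'def
  haveI : P'.IsPrime := Ideal.IsPrime.comap _
  have hyP' : (X 1 : S) ∈ P' := by
    have h0 : π ((X 1 : S) ^ M) = 0 := by
      rw [Ideal.Quotient.eq_zero_iff_mem]
      exact Ideal.subset_span rfl
    have : (X 1 : S) ^ M ∈ P' := by
      rw [hP'def, Ideal.mem_comap, h0]
      exact P.zero_mem
    exact (Ideal.IsPrime.pow_mem_iff_mem ‹P'.IsPrime› M (by omega)).mp this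
  have hmap : Ideal.map (Ideal.Quotient.mk (Ideal.span {(X 1 : S) ^ M})) P' = P :=
    Ideal.map_comap_of_surjective _ Ideal.Quotient.mk_surjective P
  by_cases hsub : P' ≤ Ideal.span {(X 1 : S)}
  · left
    have : P' = Ideal.span {(X 1 : S)} := by
      apply le_antisymm hsub
      rw [Ideal.span_le]
      rintro g rfl
      exact hyP'
    rw [← hmap, this, Ideal.map_span, Set.image_singleton]
  · right
    obtain ⟨g, hgP', hgY⟩ := SetLike.not_le_iff_exists.mp hsub
    rw [Ideal.mem_span_singleton, X_dvd_iff_setZero] at hgY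
    -- setZero 1 g ∈ P'
    obtain ⟨V, hV⟩ := exists_setZero_add_X_mul 1 g
    have hsz_mem : setZero 1 g ∈ P' := by
      have : setZero 1 g = g - X 1 * V := by linear_combination -hV
      rw [this]
      exact Submodule.sub_mem _ hgP' (Ideal.mul_mem_right _ _ hyP')
    obtain ⟨n, u, hu, hfac, -⟩ := exists_X_pow_mul_unit (setZero 1 g) (setZero_idem 1 g) hgY
    have hXn : (X 0 : S) ^ n ∈ P' := by
      have h1 : (X 0 : S) ^ n * u ∈ P' := hfac ▸ hsz_mem
      obtain ⟨w, hw⟩ := hu.exists_right_inv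
      have : (X 0 : S) ^ n * u * w ∈ P' := Ideal.mul_mem_right _ _ h1
      rwa [mul_assoc, hw, mul_one] at this
    have hn : n ≠ 0 := by
      intro h0
      subst h0
      rw [pow_zero] at hXn
      exact ‹P'.IsPrime›.ne_top (Ideal.eq_top_of_isUnit_mem _ hXn isUnit_one)
    have hX0 : (X 0 : S) ∈ P' :=
      (Ideal.IsPrime.pow_mem_iff_mem ‹P'.IsPrime› n (by omega)).mp hXn
    have hP'max : P' = IsLocalRing.maximalIdeal S := by
      apply le_antisymm (IsLocalRing.le_maximalIdeal ‹P'.IsPrime›.ne_top)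
      rw [maximalIdeal_S_eq, Ideal.span_le]
      rintro w (rfl | rfl)
      · exact hX0
      · exact hyP'
    rw [← hmap, hP'max, maximalIdeal_S_eq, Ideal.map_span, Set.image_pair,
      maximalIdeal_R_eq hM]


theorem krullDim_eq_one_abstract {α : Type*} [PartialOrder α] (p0 p1 : α) (hlt : p0 < p1)
    (hall : ∀ x : α, x = p0 ∨ x = p1) : Order.krullDim α = 1 := by
  apply le_antisymm
  · apply iSup_le
    intro p
    have hlen : p.length ≤ 1 := by
      by_contra hc
      push_neg at hc
      have h0 : (⟨0, by omega⟩ : Fin (p.length + 1)) < ⟨1, by omega⟩ :=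
        Fin.mk_lt_mk.mpr (by omega)
      have h1 : (⟨1, by omega⟩ : Fin (p.length + 1)) < ⟨2, by omega⟩ :=
        Fin.mk_lt_mk.mpr (by omega)
      have ha := p.strictMono h0
      have hb := p.strictMono h1
      rcases hall (p.toFun ⟨1, by omega⟩) with h | h
      · rcases hall (p.toFun ⟨0, by omega⟩) with h' | h'
        · rw [h, h'] at ha; exact lt_irrefl _ ha
        · rw [h, h'] at ha; exact lt_asymm hlt ha
      · rcases hall (p.toFun ⟨2, by omega⟩) with h' | h'
        · rw [h, h'] at hb; exact lt_asymm hlt hb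
        · rw [h, h'] at hb; exact lt_irrefl _ hb
    exact_mod_cast hlen
  · have hchain : ∃ q : LTSeries α, q.length = 1 := by
      refine ⟨⟨1, ![p0, p1], fun i => ?_⟩, rfl⟩
      have hi : i = 0 := Subsingleton.elim i 0
      subst hi
      simpa using hlt
    obtain ⟨q, hq⟩ := hchain
    have hle2 := Order.LTSeries.length_le_krullDim q
    rw [hq] at hle2
    exact_mod_cast hle2

theorem ringKrullDim_R (hM : M ≠ 0) [IsLocalRing R'] : ringKrullDim R' = 1 := by
  classical
  have hprime : (Ideal.span {π (X 1)}).IsPrime := span_y_isPrime hM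
  set p0 : PrimeSpectrum R' := ⟨Ideal.span {π (X 1)}, hprime⟩ with hp0
  set p1 : PrimeSpectrum R' :=
    ⟨IsLocalRing.maximalIdeal R', (IsLocalRing.maximalIdeal.isMaximal R').isPrime⟩ with hp1
  have hle : p0.asIdeal ≤ p1.asIdeal := by
    rw [hp0, hp1]
    exact IsLocalRing.le_maximalIdeal hprime.ne_top
  have hne : p0 ≠ p1 := by
    intro h
    apply mk_X0_not_mem_span_y (k := k) hM
    have h2 : Ideal.span {π (X 1)} = IsLocalRing.maximalIdeal R' :=
      congrArg PrimeSpectrum.asIdeal h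
    rw [h2, maximalIdeal_R_eq hM]
    exact Ideal.subset_span (Set.mem_insert _ _)
  have hlt : p0 < p1 := lt_of_le_of_ne hle hne
  have hall : ∀ P : PrimeSpectrum R', P = p0 ∨ P = p1 := by
    intro P
    rcases prime_eq_or_eq hM P.asIdeal P.isPrime with h | h
    · left; exact PrimeSpectrum.ext h
    · right; exact PrimeSpectrum.ext h
  exact krullDim_eq_one_abstract p0 p1 hlt hall


theorem exists_normalized_generator (hM : M ≠ 0) [IsLocalRing R'] (q : MvPowerSeries (Fin 2) k ⧸ Ideal.span {(X 1 : MvPowerSeries (Fin 2) k) ^ M})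
    (hrad : (Ideal.span {q}).radical = IsLocalRing.maximalIdeal R') :
    ∃ (j : ℕ) (E : S), 1 ≤ j ∧ Ideal.span {q} = Ideal.span {π (X 0 ^ j + X 1 * E)} := by
  obtain ⟨Qt, rfl⟩ := Ideal.Quotient.mk_surjective q
  have hx : π (X 0) ∈ (Ideal.span {π Qt}).radical := by
    rw [hrad, IsLocalRing.mem_maximalIdeal, mem_nonunits_iff]
    exact not_isUnit_mk_X hM 0
  rw [Ideal.mem_radical_iff] at hx
  obtain ⟨N, hN⟩ := hx
  rw [← map_pow, mk_mem_span_singleton_iff] at hN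
  obtain ⟨F, C, hFC⟩ := hN
  have h1 : (X 0 : S) ^ N = setZero 1 F * setZero 1 Qt := by
    have h2 := congrArg (setZero 1) hFC
    rw [map_add, map_mul, map_mul, map_pow, map_pow, setZero_X_self,
      setZero_X_ne (by decide : (1 : Fin 2) ≠ 0), zero_pow hM, mul_zero, add_zero] at h2
    exact h2
  have hQne : setZero 1 Qt ≠ 0 := by
    intro h0
    rw [h0, mul_zero] at h1
    exact pow_ne_zero N (X_prime (k := k) 0).ne_zero h1
  obtain ⟨j, u, hu, hfac, -⟩ := exists_X_pow_mul_unit (setZero 1 Qt) (setZero_idem 1 Qt) hQne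
  obtain ⟨V, hV⟩ := exists_setZero_add_X_mul 1 Qt
  have hQt : Qt = X 0 ^ j * u + X 1 * V := by rw [hV, hfac]
  have hj : 1 ≤ j := by
    by_contra hj0
    have hj0' : j = 0 := by omega
    subst hj0'
    rw [pow_zero, one_mul] at hQt
    have hcc : constantCoeff Qt ≠ 0 := by
      rw [hQt, map_add, map_mul, MvPowerSeries.constantCoeff_X, zero_mul, add_zero]
      intro h0
      exact ((MvPowerSeries.isUnit_iff_constantCoeff.mp hu).ne_zero) h0
    have hQu : IsUnit (π Qt) := (MvPowerSeries.isUnit_iff_constantCoeff.mpr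
      (Ne.isUnit hcc)).map _
    have h1' : (1 : R') ∈ Ideal.span {π Qt} := by
      rw [Ideal.span_singleton_eq_top.mpr hQu]
      exact Submodule.mem_top
    have := Ideal.le_radical h1'
    rw [hrad, IsLocalRing.mem_maximalIdeal, mem_nonunits_iff] at this
    exact this isUnit_one
  set uinv : S := ((hu.unit⁻¹ : _) : S) with huinv
  refine ⟨j, uinv * V, hj, ?_⟩
  have h3 : uinv * u = 1 := IsUnit.val_inv_mul hu
  have hmul : uinv * Qt = X 0 ^ j + X 1 * (uinv * V) := by
    calc uinv * Qt = X 0 ^ j * (uinv * u) + X 1 * (uinv * V) := by rw [hQt]; ring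
      _ = X 0 ^ j + X 1 * (uinv * V) := by rw [h3, mul_one]
  have hassoc : Associated (π Qt) (π (X 0 ^ j + X 1 * (uinv * V))) := by
    have humk : IsUnit (π uinv) := (hu.unit⁻¹).isUnit.map (Ideal.Quotient.mk _)
    obtain ⟨w, hw⟩ := humk
    refine ⟨w, ?_⟩
    rw [hw, ← congrArg π hmul, map_mul]
    exact mul_comm _ _
  apply le_antisymm
  · rw [Ideal.span_singleton_le_span_singleton]
    exact hassoc.symm.dvd
  · rw [Ideal.span_singleton_le_span_singleton]
    exact hassoc.dvd

end Quotient

section Main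

variable {m₀ : ℕ}

local notation "R'" => MvPowerSeries (Fin 2) k ⧸ Ideal.span {(X 1 : MvPowerSeries (Fin 2) k) ^ (2 * m₀)}
local notation "π" => Ideal.Quotient.mk (Ideal.span {(X 1 : MvPowerSeries (Fin 2) k) ^ (2 * m₀)})

theorem classification_core (hm : 1 ≤ m₀) [IsLocalRing R']
    (I : Ideal R') (j : ℕ) (hj : 1 ≤ j) (E : S)
    (hqI : π (X 0 ^ j + X 1 * E) ∈ I)
    (hyI : π (X 1 ^ m₀) ∈ I)
    (hsq : I ^ 2 = Ideal.span {π (X 0 ^ j + X 1 * E)} * I) :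
    I = Ideal.span {π (X 0 ^ j + X 1 * E), π (X 1 ^ m₀)} := by
  set A : S := X 0 ^ j + X 1 * E with hA
  apply le_antisymm
  swap
  · rw [Ideal.span_le]
    rintro g (rfl | rfl)
    · exact hqI
    · exact hyI
  have main : ∀ d : ℕ, ∀ G : S, π G ∈ I → (X 1 : S) ^ (2 * m₀ - d) ∣ G →
      π G ∈ Ideal.span {π A, π (X 1 ^ m₀)} := by
    intro d
    induction d with
    | zero =>
      intro G hG hdvd
      rw [Nat.sub_zero] at hdvd
      have h0 : π G = 0 := by
        rw [Ideal.Quotient.eq_zero_iff_mem, Ideal.mem_span_singleton]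
        exact hdvd
      rw [h0]
      exact Submodule.zero_mem _
    | succ d ih =>
      intro G hG hdvd
      set p := 2 * m₀ - (d + 1) with hp'
      obtain ⟨G', hG'⟩ := hdvd
      by_cases hp : m₀ ≤ p
      · have hGy : G = X 1 ^ m₀ * (X 1 ^ (p - m₀) * G') := by
          rw [hG', ← mul_assoc, ← pow_add]
          congr 2
          omega
        rw [hGy, map_mul]
        exact Ideal.mul_mem_right _ _ (Ideal.subset_span (Set.mem_insert_iff.mpr (Or.inr rfl)))
      · push_neg at hp
        obtain ⟨V, hV⟩ := exists_setZero_add_X_mul 1 G'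
        by_cases hdc : (X 0 : S) ^ j ∣ setZero 1 G'
        · obtain ⟨c', hc'⟩ := hdc
          have hG2 : G = X 1 ^ p * (X 0 ^ j * c' + X 1 * V) := by rw [hG', hV, hc']
          have hkey : G - (X 1 ^ p * c') * A = X 1 ^ (p + 1) * (V - c' * E) := by
            rw [hG2, hA]; ring
          have hmem : π (G - (X 1 ^ p * c') * A) ∈ I := by
            rw [map_sub, map_mul]
            exact Submodule.sub_mem _ hG (Ideal.mul_mem_left _ _ hqI)
          have hdvd2 : (X 1 : S) ^ (2 * m₀ - d) ∣ G - (X 1 ^ p * c') * A := by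
            rw [hkey]
            exact Dvd.dvd.mul_right (pow_dvd_pow _ (by omega)) _
          have hres := ih _ hmem hdvd2
          have hsum : π G = π (G - (X 1 ^ p * c') * A) + π (X 1 ^ p * c') * π A := by
            rw [← map_mul, ← map_add]
            congr 1
            ring
          rw [hsum]
          exact Submodule.add_mem _ hres
            (Ideal.mul_mem_left _ _ (Ideal.subset_span (Set.mem_insert _ _)))
        · exfalso
          have h2 : π (X 1 ^ m₀) * π G ∈ I ^ 2 := by
            rw [pow_two]
            exact Ideal.mul_mem_mul hyI hG
          rw [hsq, Ideal.mem_span_singleton_mul] at h2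
          obtain ⟨z, hzI, hz⟩ := h2
          obtain ⟨H, rfl⟩ := Ideal.Quotient.mk_surjective z
          have h3 : π (A * H - X 1 ^ m₀ * G) = 0 := by
            rw [map_sub, map_mul, map_mul, hz, sub_self]
          rw [Ideal.Quotient.eq_zero_iff_mem, Ideal.mem_span_singleton] at h3
          obtain ⟨C, hC⟩ := h3
          rw [hG'] at hC
          have heq : (X 0 ^ j * 1 + X 1 * E) * H + (-C) * X 1 ^ (2 * m₀) =
              X 1 ^ (m₀ + p) * G' := by
            rw [hA] at hC
            linear_combination hC
          have hdvd3 : (X 1 : S) ^ (m₀ + p) ∣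
              (X 0 ^ j * 1 + X 1 * E) * H + (-C) * X 1 ^ (2 * m₀) := ⟨G', heq⟩
          obtain ⟨H1, C1, hrec⟩ := key_recursion j 1 E isUnit_one (m₀ + p) (2 * m₀) H (-C)
            (by omega) hdvd3
          rw [heq] at hrec
          have hcan := mul_left_cancel₀
            (pow_ne_zero (m₀ + p) (X_prime (k := k) 1).ne_zero) hrec
          have h4 := congrArg (setZero 1) hcan
          rw [map_add, map_mul, map_mul, map_pow, map_add, map_mul, map_mul, map_pow,
            setZero_X_self, setZero_X_ne (by decide : (1 : Fin 2) ≠ 0), map_one, mul_one,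
            zero_mul, add_zero, zero_pow (by omega : 2 * m₀ - (m₀ + p) ≠ 0), mul_zero,
            add_zero] at h4
          exact hdc ⟨setZero 1 H1, h4⟩
  intro g hg
  obtain ⟨G, rfl⟩ := Ideal.Quotient.mk_surjective g
  exact main (2 * m₀) G hg (by rw [Nat.sub_self, pow_zero]; exact one_dvd G)




theorem cc_gen_zero {ℓ : ℕ} (hl : 1 ≤ ℓ) (E : S) :
    constantCoeff (X 0 ^ ℓ + X 1 * E) = 0 := by
  rw [map_add, map_mul, map_pow, MvPowerSeries.constantCoeff_X, MvPowerSeries.constantCoeff_X,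
    zero_pow (by omega : ℓ ≠ 0), zero_mul, add_zero]

theorem setZero_gen {ℓ : ℕ} (E : S) :
    setZero 1 (X 0 ^ ℓ + X 1 * E) = X 0 ^ ℓ := by
  rw [map_add, map_mul, setZero_X_self, zero_mul, add_zero, map_pow,
    setZero_X_ne (by decide : (1 : Fin 2) ≠ 0)]

theorem not_X1_dvd_gen {ℓ : ℕ} (E : S) : ¬ (X 1 : S) ∣ (X 0 ^ ℓ + X 1 * E) := by
  rw [X_dvd_iff_setZero, setZero_gen]
  exact pow_ne_zero ℓ (X_prime (k := k) 0).ne_zero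

theorem mk_gen_not_unit (hm : 1 ≤ m₀) {ℓ : ℕ} (hl : 1 ≤ ℓ) (E : S) :
    ¬ IsUnit (π (X 0 ^ ℓ + X 1 * E)) := by
  intro hu
  have := isUnit_of_isUnit_mk (by omega : 2 * m₀ ≠ 0) hu
  rw [MvPowerSeries.isUnit_iff_constantCoeff, cc_gen_zero hl E] at this
  exact this.ne_zero rfl

theorem mk_ypow_not_unit (hm : 1 ≤ m₀) : ¬ IsUnit (π ((X 1 : S) ^ m₀)) := by
  intro hu
  have := isUnit_of_isUnit_mk (by omega : 2 * m₀ ≠ 0) hu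
  rw [MvPowerSeries.isUnit_iff_constantCoeff, map_pow, MvPowerSeries.constantCoeff_X,
    zero_pow (by omega : m₀ ≠ 0)] at this
  exact this.ne_zero rfl

theorem radical_eq_max (hm : 1 ≤ m₀) [IsLocalRing R'] {ℓ : ℕ} (hl : 1 ≤ ℓ) (E : S)
    (I : Ideal R') (hA : π (X 0 ^ ℓ + X 1 * E) ∈ I)
    (hle : I ≤ IsLocalRing.maximalIdeal R') :
    I.radical = IsLocalRing.maximalIdeal R' := by
  apply le_antisymm
  · have h1 := Ideal.radical_mono hle
    rwa [(IsLocalRing.maximalIdeal.isMaximal R').isPrime.radical] at h1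
  · have hy : π (X 1) ∈ I.radical := by
      rw [Ideal.mem_radical_iff]
      refine ⟨2 * m₀, ?_⟩
      have h0 : (π (X 1)) ^ (2 * m₀) = 0 := by
        rw [← map_pow, Ideal.Quotient.eq_zero_iff_mem]
        exact Ideal.subset_span rfl
      rw [h0]
      exact I.zero_mem
    have hxr : π (X 0) ∈ I.radical := by
      apply Ideal.mem_radical_of_pow_mem (m := ℓ)
      have hxl : (π (X 0)) ^ ℓ = π (X 0 ^ ℓ + X 1 * E) - π (X 1) * π E := by
        rw [← map_pow, ← map_mul, ← map_sub]
        congr 1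
        ring
      rw [hxl]
      exact Submodule.sub_mem _ (Ideal.le_radical hA)
        (Ideal.mul_mem_right _ _ hy)
    rw [maximalIdeal_R_eq (by omega : 2 * m₀ ≠ 0), Ideal.span_le]
    rintro g (rfl | rfl)
    · exact hxr
    · exact hy

theorem y_pow_not_mem (hm : 1 ≤ m₀) {ℓ : ℕ} (hl : 1 ≤ ℓ) (E : S) :
    π ((X 1 : S) ^ m₀) ∉ Ideal.span {π (X 0 ^ ℓ + X 1 * E)} := by
  rw [mk_mem_span_singleton_iff]
  rintro ⟨F, C, hFC⟩
  have heq : (X 0 ^ ℓ * 1 + X 1 * E) * F + C * X 1 ^ (2 * m₀) = X 1 ^ m₀ * 1 := by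
    linear_combination -hFC
  have hdvd : (X 1 : S) ^ m₀ ∣ (X 0 ^ ℓ * 1 + X 1 * E) * F + C * X 1 ^ (2 * m₀) := ⟨1, heq⟩
  obtain ⟨H1, C1, hrec⟩ := key_recursion ℓ 1 E isUnit_one m₀ (2 * m₀) F C (by omega) hdvd
  rw [heq] at hrec
  have hcan := mul_left_cancel₀ (pow_ne_zero m₀ (X_prime (k := k) 1).ne_zero) hrec
  have c1 : constantCoeff (X 0 ^ ℓ * 1 + X 1 * E) = 0 := by
    rw [mul_one]
    exact cc_gen_zero hl E
  have c2 : constantCoeff ((X 1 : S) ^ (2 * m₀ - m₀)) = 0 := by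
    rw [map_pow, MvPowerSeries.constantCoeff_X, zero_pow (by omega : 2 * m₀ - m₀ ≠ 0)]
  have hcc := congrArg (constantCoeff) hcan
  rw [map_one, map_add, map_mul, map_mul, c1, c2, zero_mul, mul_zero, add_zero] at hcc
  exact one_ne_zero hcc

theorem sq_eq (hm : 1 ≤ m₀) {ℓ : ℕ} (E : S) [IsLocalRing R'] :
    (Ideal.span {π (X 0 ^ ℓ + X 1 * E), π ((X 1 : S) ^ m₀)}) ^ 2 =
      Ideal.span {π (X 0 ^ ℓ + X 1 * E)} *
        Ideal.span {π (X 0 ^ ℓ + X 1 * E), π ((X 1 : S) ^ m₀)} := by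
  set a := π (X 0 ^ ℓ + X 1 * E) with ha
  set b := π ((X 1 : S) ^ m₀) with hb
  have hb2 : b * b = 0 := by
    rw [hb, ← map_mul, ← pow_add, Ideal.Quotient.eq_zero_iff_mem]
    have h2 : m₀ + m₀ = 2 * m₀ := by ring
    rw [h2]
    exact Ideal.subset_span rfl
  rw [pow_two]
  apply le_antisymm
  · apply Ideal.mul_le.mpr
    intro r hr s hs
    obtain ⟨r1, r2, hr12⟩ := Ideal.mem_span_pair.mp hr
    obtain ⟨s1, s2, hs12⟩ := Ideal.mem_span_pair.mp hs
    have hrs : r * s = a * (r1 * s) + a * (r2 * s1 * b) := by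
      linear_combination (-s) * hr12 + (-(r2 * b)) * hs12 + (r2 * s2) * hb2
    rw [hrs]
    refine Submodule.add_mem _ ?_ ?_
    · exact Ideal.mul_mem_mul (Ideal.subset_span rfl)
        (Ideal.mul_mem_left _ _ hs)
    · refine Ideal.mul_mem_mul (Ideal.subset_span rfl) ?_
      exact Ideal.mul_mem_left _ _ (Ideal.subset_span (Set.mem_insert_iff.mpr (Or.inr rfl)))
  · apply Ideal.mul_mono_left
    rw [Ideal.span_le]
    rintro g rfl
    exact Ideal.subset_span (Set.mem_insert _ _)

theorem sq_eq_span2 (hm : 1 ≤ m₀) {ℓ : ℕ} (E : S) [IsLocalRing R'] :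
    (Ideal.span {π (X 0 ^ ℓ + X 1 * E), π ((X 1 : S) ^ m₀)}) ^ 2 =
      Ideal.span {π ((X 0 ^ ℓ + X 1 * E) * (X 0 ^ ℓ + X 1 * E)),
        π ((X 0 ^ ℓ + X 1 * E) * X 1 ^ m₀)} := by
  set a := π (X 0 ^ ℓ + X 1 * E) with ha
  set b := π ((X 1 : S) ^ m₀) with hb
  have haa : π ((X 0 ^ ℓ + X 1 * E) * (X 0 ^ ℓ + X 1 * E)) = a * a := by
    rw [map_mul]
  have hab : π ((X 0 ^ ℓ + X 1 * E) * X 1 ^ m₀) = a * b := by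
    rw [map_mul]
  have hb2 : b * b = 0 := by
    rw [hb, ← map_mul, ← pow_add, Ideal.Quotient.eq_zero_iff_mem]
    have h2 : m₀ + m₀ = 2 * m₀ := by ring
    rw [h2]
    exact Ideal.subset_span rfl
  rw [pow_two]
  apply le_antisymm
  · apply Ideal.mul_le.mpr
    intro r hr s hs
    obtain ⟨r1, r2, hr12⟩ := Ideal.mem_span_pair.mp hr
    obtain ⟨s1, s2, hs12⟩ := Ideal.mem_span_pair.mp hs
    rw [Ideal.mem_span_pair]
    refine ⟨r1 * s1, r1 * s2 + r2 * s1, ?_⟩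
    rw [haa, hab]
    linear_combination (s) * hr12 + (r1 * a + r2 * b) * hs12 + (-(r2 * s2)) * hb2
  · rw [Ideal.span_le]
    rintro g (rfl | rfl)
    · rw [SetLike.mem_coe, haa]
      exact Ideal.mul_mem_mul (Ideal.subset_span (Set.mem_insert _ _))
        (Ideal.subset_span (Set.mem_insert _ _))
    · rw [SetLike.mem_coe, hab]
      exact Ideal.mul_mem_mul (Ideal.subset_span (Set.mem_insert _ _))
        (Ideal.subset_span (Set.mem_insert_iff.mpr (Or.inr rfl)))

theorem inj_core (hm : 1 ≤ m₀) {ℓ : ℕ} (hl : 1 ≤ ℓ) (E : S) [IsLocalRing R']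
    (R0 R1 : S)
    (hmem : π R0 * π (X 0 ^ ℓ + X 1 * E) + π R1 * π ((X 1 : S) ^ m₀) ∈
      (Ideal.span {π (X 0 ^ ℓ + X 1 * E), π ((X 1 : S) ^ m₀)}) ^ 2) :
    π R0 ∈ Ideal.span {π (X 0 ^ ℓ + X 1 * E), π ((X 1 : S) ^ m₀)} ∧
      π R1 ∈ Ideal.span {π (X 0 ^ ℓ + X 1 * E), π ((X 1 : S) ^ m₀)} := by
  rw [sq_eq_span2 hm E] at hmem
  have hmem' : π (R0 * (X 0 ^ ℓ + X 1 * E) + R1 * X 1 ^ m₀) ∈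
      Ideal.span {π ((X 0 ^ ℓ + X 1 * E) * (X 0 ^ ℓ + X 1 * E)),
        π ((X 0 ^ ℓ + X 1 * E) * X 1 ^ m₀)} := by
    rw [map_add, map_mul, map_mul]
    exact hmem
  rw [mk_mem_span_pair_iff] at hmem'
  obtain ⟨F, G, C, hFC⟩ := hmem'
  have heq : (X 0 ^ ℓ + X 1 * E) * (R0 - F * (X 0 ^ ℓ + X 1 * E) - G * X 1 ^ m₀)
      = X 1 ^ m₀ * (C * X 1 ^ m₀ - R1) := by
    linear_combination hFC
  have hdvd : (X 1 : S) ^ m₀ ∣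
      (X 0 ^ ℓ + X 1 * E) * (R0 - F * (X 0 ^ ℓ + X 1 * E) - G * X 1 ^ m₀) :=
    ⟨C * X 1 ^ m₀ - R1, heq⟩
  have hZ := (X_prime (k := k) 1).pow_dvd_of_dvd_mul_left m₀ (not_X1_dvd_gen E) hdvd
  obtain ⟨Z, hZ'⟩ := hZ
  have hcan : (X 0 ^ ℓ + X 1 * E) * Z = C * X 1 ^ m₀ - R1 := by
    apply mul_left_cancel₀ (pow_ne_zero m₀ (X_prime (k := k) 1).ne_zero)
    rw [← heq, hZ']
    ring
  have hamem : π (X 0 ^ ℓ + X 1 * E) ∈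
      Ideal.span {π (X 0 ^ ℓ + X 1 * E), π ((X 1 : S) ^ m₀)} :=
    Ideal.subset_span (Set.mem_insert _ _)
  have hbmem : π ((X 1 : S) ^ m₀) ∈
      Ideal.span {π (X 0 ^ ℓ + X 1 * E), π ((X 1 : S) ^ m₀)} :=
    Ideal.subset_span (Set.mem_insert_iff.mpr (Or.inr rfl))
  constructor
  · have hR0 : R0 = X 1 ^ m₀ * Z + F * (X 0 ^ ℓ + X 1 * E) + G * X 1 ^ m₀ := by
      linear_combination hZ'
    have h5 : π R0 = π ((X 1 : S) ^ m₀) * π Z + π F * π (X 0 ^ ℓ + X 1 * E)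
        + π G * π ((X 1 : S) ^ m₀) := by
      rw [← map_mul, ← map_mul, ← map_mul, ← map_add, ← map_add]
      exact congrArg _ hR0
    rw [h5]
    exact Submodule.add_mem _ (Submodule.add_mem _ (Ideal.mul_mem_right _ _ hbmem)
      (Ideal.mul_mem_left _ _ hamem)) (Ideal.mul_mem_left _ _ hbmem)
  · have hR1 : R1 = C * X 1 ^ m₀ - (X 0 ^ ℓ + X 1 * E) * Z := by
      linear_combination hcan
    have h6 : π R1 = π C * π ((X 1 : S) ^ m₀) - π (X 0 ^ ℓ + X 1 * E) * π Z := by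
      rw [← map_mul, ← map_mul, ← map_sub]
      exact congrArg _ hR1
    rw [h6]
    exact Submodule.sub_mem _ (Ideal.mul_mem_left _ _ hbmem)
      (Ideal.mul_mem_right _ _ hamem)



theorem cotangent_free (hm : 1 ≤ m₀) {ℓ : ℕ} (hl : 1 ≤ ℓ) (E : S) [IsLocalRing R'] :
    Module.Free (R' ⧸ Ideal.span {π (X 0 ^ ℓ + X 1 * E), π ((X 1 : S) ^ m₀)})
      (Ideal.span {π (X 0 ^ ℓ + X 1 * E), π ((X 1 : S) ^ m₀)}).Cotangent := by
  classical
  set I : Ideal R' := Ideal.span {π (X 0 ^ ℓ + X 1 * E), π ((X 1 : S) ^ m₀)} with hI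
  have hamem : π (X 0 ^ ℓ + X 1 * E) ∈ I := Ideal.subset_span (Set.mem_insert _ _)
  have hbmem : π ((X 1 : S) ^ m₀) ∈ I := Ideal.subset_span (Set.mem_insert_iff.mpr (Or.inr rfl))
  set av : I := ⟨_, hamem⟩ with hav
  set bv : I := ⟨_, hbmem⟩ with hbv
  set v : Fin 2 → I.Cotangent := ![I.toCotangent av, I.toCotangent bv] with hv
  have hbridge : ∀ (r : R') (z : I),
      (Ideal.Quotient.mk I r) • I.toCotangent z = I.toCotangent (r • z) := fun r z => rfl
  have hspan : ⊤ ≤ Submodule.span (R' ⧸ I) (Set.range v) := by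
    intro m _
    obtain ⟨z, rfl⟩ := I.toCotangent_surjective m
    obtain ⟨u1, u2, hu⟩ := Ideal.mem_span_pair.mp z.2
    have hz : z = u1 • av + u2 • bv := by
      apply Subtype.ext
      exact hu.symm
    rw [hz, map_add, ← hbridge u1 av, ← hbridge u2 bv]
    apply Submodule.add_mem
    · exact Submodule.smul_mem _ _ (Submodule.subset_span ⟨0, rfl⟩)
    · exact Submodule.smul_mem _ _ (Submodule.subset_span ⟨1, rfl⟩)
  have hli : LinearIndependent (R' ⧸ I) v := by
    rw [Fintype.linearIndependent_iff]
    intro g hg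
    rw [Fin.sum_univ_two] at hg
    obtain ⟨r0, hr0⟩ := Ideal.Quotient.mk_surjective (g 0)
    obtain ⟨r1, hr1⟩ := Ideal.Quotient.mk_surjective (g 1)
    have h2 : I.toCotangent (r0 • av + r1 • bv) = 0 := by
      rw [map_add, ← hbridge r0 av, ← hbridge r1 bv, hr0, hr1]
      exact hg
    rw [Ideal.toCotangent_eq_zero] at h2
    have h3 : ((r0 • av + r1 • bv : I) : R')
        = r0 * π (X 0 ^ ℓ + X 1 * E) + r1 * π ((X 1 : S) ^ m₀) := rfl
    rw [h3] at h2
    obtain ⟨R0, rfl⟩ := Ideal.Quotient.mk_surjective r0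
    obtain ⟨R1, rfl⟩ := Ideal.Quotient.mk_surjective r1
    have h4 := inj_core hm hl E R0 R1 h2
    have hg0 : g 0 = 0 := by
      rw [← hr0, Ideal.Quotient.eq_zero_iff_mem]
      exact h4.1
    have hg1 : g 1 = 0 := by
      rw [← hr1, Ideal.Quotient.eq_zero_iff_mem]
      exact h4.2
    intro i
    fin_cases i
    · exact hg0
    · exact hg1
  exact Module.Free.of_basis (Module.Basis.mk hli hspan)



theorem ell_le {a b : ℕ} (W : S) (h : (X 0 : S) ^ a = W * X 0 ^ b) : b ≤ a := by
  by_contra hc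
  push_neg at hc
  obtain ⟨c, rfl⟩ : ∃ c, b = a + c + 1 := ⟨b - a - 1, by omega⟩
  have h1 : (X 0 : S) ^ a * 1 = X 0 ^ a * (W * X 0 ^ (c + 1)) := by
    linear_combination h
  have h2 := mul_left_cancel₀ (pow_ne_zero a (X_prime (k := k) 0).ne_zero) h1
  have hcc := congrArg (constantCoeff) h2
  rw [map_one, map_mul, map_pow, MvPowerSeries.constantCoeff_X,
    zero_pow (by omega : c + 1 ≠ 0), mul_zero] at hcc
  exact one_ne_zero hcc

theorem y_not_mem (hm : 2 ≤ m₀) {ℓ : ℕ} (hl : 1 ≤ ℓ) (E : S) :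
    π (X 1) ∉ Ideal.span {π (X 0 ^ ℓ + X 1 * E), π ((X 1 : S) ^ m₀)} := by
  rw [mk_mem_span_pair_iff]
  rintro ⟨F, G, C, hFC⟩
  have hszF : setZero 1 F = 0 := by
    have h1 := congrArg (setZero 1) hFC
    rw [setZero_X_self, map_add, map_add, map_mul, map_mul, map_mul, setZero_gen,
      map_pow, map_pow, setZero_X_self, zero_pow (by omega : m₀ ≠ 0),
      zero_pow (by omega : 2 * m₀ ≠ 0), mul_zero, mul_zero, add_zero, add_zero] at h1
    rcases mul_eq_zero.mp h1.symm with h | h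
    · exact h
    · exact absurd h (pow_ne_zero ℓ (X_prime (k := k) 0).ne_zero)
  obtain ⟨F1, hF1⟩ := (X_dvd_iff_setZero 1 F).mpr hszF
  have e1 : (X 1 : S) ^ m₀ = X 1 * X 1 ^ (m₀ - 1) := by
    rw [show m₀ = 1 + (m₀ - 1) by omega, pow_add, pow_one]
    rw [show 1 + (m₀ - 1) - 1 = m₀ - 1 by omega]
  have e2 : (X 1 : S) ^ (2 * m₀) = X 1 * X 1 ^ (2 * m₀ - 1) := by
    rw [show 2 * m₀ = 1 + (2 * m₀ - 1) by omega, pow_add, pow_one]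
    rw [show 1 + (2 * m₀ - 1) - 1 = 2 * m₀ - 1 by omega]
  have hFC' : X 1 = (X 1 * F1) * (X 0 ^ ℓ + X 1 * E) + G * X 1 ^ m₀ + C * X 1 ^ (2 * m₀) := by
    rw [← hF1]
    exact hFC
  have h3 : (X 1 : S) * 1 = X 1 * (F1 * (X 0 ^ ℓ + X 1 * E) + G * X 1 ^ (m₀ - 1)
      + C * X 1 ^ (2 * m₀ - 1)) := by
    linear_combination hFC' + G * e1 + C * e2
  have h4 := mul_left_cancel₀ (X_prime (k := k) 1).ne_zero h3
  have c1 : constantCoeff ((X 1 : S) ^ (m₀ - 1)) = 0 := by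
    rw [map_pow, MvPowerSeries.constantCoeff_X, zero_pow (by omega : m₀ - 1 ≠ 0)]
  have c2 : constantCoeff ((X 1 : S) ^ (2 * m₀ - 1)) = 0 := by
    rw [map_pow, MvPowerSeries.constantCoeff_X, zero_pow (by omega : 2 * m₀ - 1 ≠ 0)]
  have hcc := congrArg (constantCoeff) h4
  rw [map_one, map_add, map_add, map_mul, map_mul, map_mul, cc_gen_zero hl E, c1, c2,
    mul_zero, mul_zero, mul_zero, add_zero, add_zero] at hcc
  exact one_ne_zero hcc



theorem ell_le_of_mem (hm : 1 ≤ m₀) {ℓ ℓ' : ℕ} (E E' : S)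
    (h : π (X 0 ^ ℓ + X 1 * E) ∈
      Ideal.span {π (X 0 ^ ℓ' + X 1 * E'), π ((X 1 : S) ^ m₀)}) :
    ℓ' ≤ ℓ := by
  rw [mk_mem_span_pair_iff] at h
  obtain ⟨F, G, C, hFC⟩ := h
  have hz1 : setZero 1 ((X 1 : S) ^ m₀) = 0 := by
    rw [map_pow, setZero_X_self, zero_pow (by omega : m₀ ≠ 0)]
  have hz2 : setZero 1 ((X 1 : S) ^ (2 * m₀)) = 0 := by
    rw [map_pow, setZero_X_self, zero_pow (by omega : 2 * m₀ ≠ 0)]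
  have h1 := congrArg (setZero 1) hFC
  rw [setZero_gen, map_add, map_add, map_mul, map_mul, map_mul, setZero_gen, hz1, hz2,
    mul_zero, mul_zero, add_zero, add_zero] at h1
  exact ell_le _ h1


end Main

end UlrichAux

open IsLocalRing in
/-- For `R = k[[X, Y]]/(Y^{2m₀})`, `m₀ ≥ 2`: the Ulrich ideals
`I` of `R` with `y^{m₀} ∈ I` are exactly the ideals `(x^ℓ + αy, y^{m₀})` with
`ℓ > 0`, `α ∈ R`; moreover two such ideals coincide only if the `ℓ`'s agree and
the `α`'s are congruent modulo the maximal ideal of `R`. -/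
theorem ulrich_ideals_Y_even
    (k : Type*) [Field k] (m₀ : ℕ) (hm : 2 ≤ m₀)
    (X Y : MvPowerSeries (Fin 2) k)
    (hX : X = MvPowerSeries.X 0) (hY : Y = MvPowerSeries.X 1)
    (f : MvPowerSeries (Fin 2) k) (hf : f = Y ^ (2 * m₀))
    [IsLocalRing (MvPowerSeries (Fin 2) k ⧸ Ideal.span {f})]
    (x y : MvPowerSeries (Fin 2) k ⧸ Ideal.span {f})
    (hx : x = Ideal.Quotient.mk (Ideal.span {f}) X)
    (hy : y = Ideal.Quotient.mk (Ideal.span {f}) Y) :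
    ({I : Ideal (MvPowerSeries (Fin 2) k ⧸ Ideal.span {f}) |
        I.IsUlrich ∧ y ^ m₀ ∈ I} =
      {I : Ideal (MvPowerSeries (Fin 2) k ⧸ Ideal.span {f}) |
        ∃ (ℓ : ℕ) (α : MvPowerSeries (Fin 2) k ⧸ Ideal.span {f}), 0 < ℓ ∧
          I = Ideal.span {x ^ ℓ + α * y, y ^ m₀}}) ∧
    (∀ (ℓ ℓ' : ℕ), 0 < ℓ → 0 < ℓ' →
      ∀ α α' : MvPowerSeries (Fin 2) k ⧸ Ideal.span {f},
        Ideal.span {x ^ ℓ + α * y, y ^ m₀} = Ideal.span {x ^ ℓ' + α' * y, y ^ m₀} →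
        ℓ = ℓ' ∧ α - α' ∈ maximalIdeal (MvPowerSeries (Fin 2) k ⧸ Ideal.span {f})) := by
  subst hX hY hf hx hy
  have hM : 2 * m₀ ≠ 0 := by omega
  have hm1 : 1 ≤ m₀ := by omega
  have e2 : ((Ideal.Quotient.mk (Ideal.span {(MvPowerSeries.X 1 : MvPowerSeries (Fin 2) k) ^ (2 * m₀)})) (MvPowerSeries.X 1)) ^ m₀
      = (Ideal.Quotient.mk (Ideal.span {(MvPowerSeries.X 1 : MvPowerSeries (Fin 2) k) ^ (2 * m₀)})) ((MvPowerSeries.X 1 : MvPowerSeries (Fin 2) k) ^ m₀) := (map_pow _ _ _).symm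
  have e1 : ∀ (ℓ : ℕ) (E : MvPowerSeries (Fin 2) k),
      ((Ideal.Quotient.mk (Ideal.span {(MvPowerSeries.X 1 : MvPowerSeries (Fin 2) k) ^ (2 * m₀)})) (MvPowerSeries.X 0)) ^ ℓ + (Ideal.Quotient.mk (Ideal.span {(MvPowerSeries.X 1 : MvPowerSeries (Fin 2) k) ^ (2 * m₀)})) E * (Ideal.Quotient.mk (Ideal.span {(MvPowerSeries.X 1 : MvPowerSeries (Fin 2) k) ^ (2 * m₀)})) (MvPowerSeries.X 1)
      = (Ideal.Quotient.mk (Ideal.span {(MvPowerSeries.X 1 : MvPowerSeries (Fin 2) k) ^ (2 * m₀)})) (MvPowerSeries.X 0 ^ ℓ + MvPowerSeries.X 1 * E) := by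
    intro ℓ E
    rw [map_add, map_pow, map_mul]
    ring
  constructor
  · ext I
    simp only [Set.mem_setOf_eq]
    constructor
    · rintro ⟨⟨hrad, Q, ⟨n, s, ⟨hdim, hradQ⟩, hQeq⟩, hQle, hIne, hsq, hfree⟩, hyI⟩
      have hn : n = 1 := by
        have hdim1 : ((n : ℕ) : WithBot ℕ∞) = ((1 : ℕ) : WithBot ℕ∞) := by
          rw [hdim, UlrichAux.ringKrullDim_R hM, Nat.cast_one]
        exact_mod_cast hdim1
      subst hn
      have hrange : Set.range s = {s 0} := by
        rw [Set.range_unique]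
        rfl
      rw [hrange] at hradQ hQeq
      obtain ⟨j, E, hj, hspan⟩ := UlrichAux.exists_normalized_generator hM (s 0) hradQ
      have hqmem : (Ideal.Quotient.mk (Ideal.span {(MvPowerSeries.X 1 : MvPowerSeries (Fin 2) k) ^ (2 * m₀)})) (MvPowerSeries.X 0 ^ j + MvPowerSeries.X 1 * E) ∈ I := by
        apply hQle
        rw [hQeq, hspan]
        exact Ideal.subset_span rfl
      have hyI' : (Ideal.Quotient.mk (Ideal.span {(MvPowerSeries.X 1 : MvPowerSeries (Fin 2) k) ^ (2 * m₀)})) ((MvPowerSeries.X 1 : MvPowerSeries (Fin 2) k) ^ m₀) ∈ I := by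
        rw [← e2]
        exact hyI
      have hsq' : I ^ 2 = Ideal.span {(Ideal.Quotient.mk (Ideal.span {(MvPowerSeries.X 1 : MvPowerSeries (Fin 2) k) ^ (2 * m₀)})) (MvPowerSeries.X 0 ^ j + MvPowerSeries.X 1 * E)} * I := by
        rw [hsq, hQeq, hspan]
      have hcls := UlrichAux.classification_core (m₀ := m₀) hm1 I j hj E hqmem hyI' hsq'
      refine ⟨j, (Ideal.Quotient.mk (Ideal.span {(MvPowerSeries.X 1 : MvPowerSeries (Fin 2) k) ^ (2 * m₀)})) E, by omega, ?_⟩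
      rw [hcls, e1 j E, e2]
    · rintro ⟨ℓ, α, hl, rfl⟩
      obtain ⟨E, rfl⟩ := Ideal.Quotient.mk_surjective α
      rw [e1 ℓ E, e2]
      have hl1 : 1 ≤ ℓ := hl
      constructor
      · constructor
        · apply UlrichAux.radical_eq_max hm1 hl1 E
          · exact Ideal.subset_span (Set.mem_insert _ _)
          · rw [Ideal.span_le]
            rintro g (rfl | rfl)
            · rw [SetLike.mem_coe, mem_maximalIdeal, mem_nonunits_iff]
              exact UlrichAux.mk_gen_not_unit hm1 hl1 E
            · rw [SetLike.mem_coe, mem_maximalIdeal, mem_nonunits_iff]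
              exact UlrichAux.mk_ypow_not_unit hm1
        · have hr : Set.range ![(Ideal.Quotient.mk (Ideal.span {(MvPowerSeries.X 1 : MvPowerSeries (Fin 2) k) ^ (2 * m₀)})) (MvPowerSeries.X 0 ^ ℓ + MvPowerSeries.X 1 * E)]
              = {(Ideal.Quotient.mk (Ideal.span {(MvPowerSeries.X 1 : MvPowerSeries (Fin 2) k) ^ (2 * m₀)})) (MvPowerSeries.X 0 ^ ℓ + MvPowerSeries.X 1 * E)} := by
            rw [Set.range_unique]
            rfl
          refine ⟨Ideal.span {(Ideal.Quotient.mk (Ideal.span {(MvPowerSeries.X 1 : MvPowerSeries (Fin 2) k) ^ (2 * m₀)})) (MvPowerSeries.X 0 ^ ℓ + MvPowerSeries.X 1 * E)},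
            ⟨1, ![(Ideal.Quotient.mk (Ideal.span {(MvPowerSeries.X 1 : MvPowerSeries (Fin 2) k) ^ (2 * m₀)})) (MvPowerSeries.X 0 ^ ℓ + MvPowerSeries.X 1 * E)], ⟨?_, ?_⟩, ?_⟩,
            ?_, ?_, ?_, ?_⟩
          · rw [UlrichAux.ringKrullDim_R hM, Nat.cast_one]
          · rw [hr]
            apply UlrichAux.radical_eq_max hm1 hl1 E
            · exact Ideal.subset_span rfl
            · rw [Ideal.span_le]
              rintro g rfl
              rw [SetLike.mem_coe, mem_maximalIdeal, mem_nonunits_iff]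
              exact UlrichAux.mk_gen_not_unit hm1 hl1 E
          · rw [hr]
          · exact Ideal.span_mono (Set.singleton_subset_iff.mpr (Set.mem_insert _ _))
          · intro hEq
            apply UlrichAux.y_pow_not_mem hm1 hl1 E
            have hmem : (Ideal.Quotient.mk (Ideal.span {(MvPowerSeries.X 1 : MvPowerSeries (Fin 2) k) ^ (2 * m₀)})) ((MvPowerSeries.X 1 : MvPowerSeries (Fin 2) k) ^ m₀) ∈
                Ideal.span {(Ideal.Quotient.mk (Ideal.span {(MvPowerSeries.X 1 : MvPowerSeries (Fin 2) k) ^ (2 * m₀)})) (MvPowerSeries.X 0 ^ ℓ + MvPowerSeries.X 1 * E),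
                  (Ideal.Quotient.mk (Ideal.span {(MvPowerSeries.X 1 : MvPowerSeries (Fin 2) k) ^ (2 * m₀)})) ((MvPowerSeries.X 1 : MvPowerSeries (Fin 2) k) ^ m₀)} :=
              Ideal.subset_span (Set.mem_insert_iff.mpr (Or.inr rfl))
            rw [hEq] at hmem
            exact hmem
          · exact UlrichAux.sq_eq hm1 E
          · exact UlrichAux.cotangent_free hm1 hl1 E
      · exact Ideal.subset_span (Set.mem_insert_iff.mpr (Or.inr rfl))
  · intro ℓ ℓ' hl hl' α α' hsp
    obtain ⟨E, rfl⟩ := Ideal.Quotient.mk_surjective α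
    obtain ⟨E', rfl⟩ := Ideal.Quotient.mk_surjective α'
    rw [e1 ℓ E, e1 ℓ' E', e2] at hsp
    have hle1 : ℓ' ≤ ℓ := by
      apply UlrichAux.ell_le_of_mem hm1 E E'
      rw [← hsp]
      exact Ideal.subset_span (Set.mem_insert _ _)
    have hle2 : ℓ ≤ ℓ' := by
      apply UlrichAux.ell_le_of_mem hm1 E' E
      rw [hsp]
      exact Ideal.subset_span (Set.mem_insert _ _)
    have hll : ℓ = ℓ' := le_antisymm hle2 hle1
    subst hll
    refine ⟨rfl, ?_⟩
    by_contra hcon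
    rw [mem_maximalIdeal, mem_nonunits_iff, not_not] at hcon
    have hd : ((Ideal.Quotient.mk (Ideal.span {(MvPowerSeries.X 1 : MvPowerSeries (Fin 2) k) ^ (2 * m₀)})) E - (Ideal.Quotient.mk (Ideal.span {(MvPowerSeries.X 1 : MvPowerSeries (Fin 2) k) ^ (2 * m₀)})) E') * (Ideal.Quotient.mk (Ideal.span {(MvPowerSeries.X 1 : MvPowerSeries (Fin 2) k) ^ (2 * m₀)})) (MvPowerSeries.X 1) ∈
        Ideal.span {(Ideal.Quotient.mk (Ideal.span {(MvPowerSeries.X 1 : MvPowerSeries (Fin 2) k) ^ (2 * m₀)})) (MvPowerSeries.X 0 ^ ℓ + MvPowerSeries.X 1 * E'),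
          (Ideal.Quotient.mk (Ideal.span {(MvPowerSeries.X 1 : MvPowerSeries (Fin 2) k) ^ (2 * m₀)})) ((MvPowerSeries.X 1 : MvPowerSeries (Fin 2) k) ^ m₀)} := by
      have hδ : ((Ideal.Quotient.mk (Ideal.span {(MvPowerSeries.X 1 : MvPowerSeries (Fin 2) k) ^ (2 * m₀)})) E - (Ideal.Quotient.mk (Ideal.span {(MvPowerSeries.X 1 : MvPowerSeries (Fin 2) k) ^ (2 * m₀)})) E') * (Ideal.Quotient.mk (Ideal.span {(MvPowerSeries.X 1 : MvPowerSeries (Fin 2) k) ^ (2 * m₀)})) (MvPowerSeries.X 1)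
          = (Ideal.Quotient.mk (Ideal.span {(MvPowerSeries.X 1 : MvPowerSeries (Fin 2) k) ^ (2 * m₀)})) (MvPowerSeries.X 0 ^ ℓ + MvPowerSeries.X 1 * E)
            - (Ideal.Quotient.mk (Ideal.span {(MvPowerSeries.X 1 : MvPowerSeries (Fin 2) k) ^ (2 * m₀)})) (MvPowerSeries.X 0 ^ ℓ + MvPowerSeries.X 1 * E') := by
        rw [← map_sub, ← map_mul, ← map_sub]
        exact congrArg _ (by ring)
      rw [hδ]
      refine Submodule.sub_mem _ ?_ ?_
      · rw [← hsp]
        exact Ideal.subset_span (Set.mem_insert _ _)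
      · exact Ideal.subset_span (Set.mem_insert _ _)
    have hy1 := Ideal.mul_mem_left _ (↑hcon.unit⁻¹) hd
    rw [← mul_assoc, IsUnit.val_inv_mul, one_mul] at hy1
    exact UlrichAux.y_not_mem hm hl E' hy1
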